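/- Consider the 7-dimensional ω = 0 OSN system with strictly positive parameters, and set x̃₁ := Λβ_w/(μ(β + β_w)), Ũ := μ/β_w, W̃ := (β x̃₁ − μ_n)/β_w. Then the point RFE := (x̃₁, Ũ, W̃, 0, 0, 0, 0) is an equilibrium of the system, and W̃ > 0 if and only if R₀ := βΛ/(μ μ_n) > 1 + β/β_w. -/
import Mathlib


open Matrix Polynomial

noncomputable section

/-- The ω = 0 OSN rumor-spreading vector field on ℝ^7, in coordinates
`(x₁, U, W, S₁, B₁, S₂, B₂)` (indices 0,…,6). -/
def osnField (Λ μ μn β βw β₁ β₂ γ₁ γ₂ μ₁ μ₂ α₁ α₂ ε₁ ε₂ : ℝ)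
    (p : Fin 7 → ℝ) : Fin 7 → ℝ :=
  ![Λ - μ * p 0 - β * p 0 * p 1,
    p 1 * (β * p 0 - μn - βw * p 2),
    βw * p 1 * p 2 - μ * p 2,
    β₁ * p 4 * p 1 / (ε₁ * p 4 + α₁ * p 1 + 1) - γ₁ * p 3,
    γ₁ * p 3 - μ₁ * p 4,
    β₂ * p 6 * p 1 / (ε₂ * p 6 + α₂ * p 1 + 1) - γ₂ * p 5,
    γ₂ * p 5 - μ₂ * p 6]

/-- The Jacobian matrix of a vector field on ℝ^7, entry `(i, j)` being
`∂f_i/∂x_j` computed via the Fréchet derivative. -/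
def jacobian7 (f : (Fin 7 → ℝ) → Fin 7 → ℝ) (x : Fin 7 → ℝ) :
    Matrix (Fin 7) (Fin 7) ℝ :=
  fun i j => fderiv ℝ (fun p => f p i) x (Pi.single j 1)

/-- `μ : ℂ` is an eigenvalue of the real matrix `A`, i.e. a complex root of its
characteristic polynomial. -/
def Matrix.IsEigenvalueR {n : ℕ} (A : Matrix (Fin n) (Fin n) ℝ) (μ : ℂ) : Prop :=
  ((A.map (Complex.ofReal)).charpoly).IsRoot μ

/-- A real matrix is Hurwitz if every complex eigenvalue has strictly negative
real part. -/
def Matrix.IsHurwitz {n : ℕ} (A : Matrix (Fin n) (Fin n) ℝ) : Prop :=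
  ∀ μ : ℂ, A.IsEigenvalueR μ → μ.re < 0


/-- The rumor-free point `RFE = (x̃₁, Ũ, W̃, 0, 0, 0, 0)` with
`x̃₁ = Λβw/(μ(β+βw))`, `Ũ = μ/βw`, `W̃ = (βx̃₁ − μn)/βw` is an equilibrium of the
ω = 0 OSN system, and `W̃ > 0` iff `R₀ := βΛ/(μ μn) > 1 + β/βw`. -/
theorem osn_RFE_equilibrium
    (Λ μ μn β βw β₁ β₂ γ₁ γ₂ μ₁ μ₂ α₁ α₂ ε₁ ε₂ : ℝ)
    (hΛ : 0 < Λ) (hμ : 0 < μ) (hμn : 0 < μn) (hβ : 0 < β) (hβw : 0 < βw)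
    (hβ₁ : 0 < β₁) (hβ₂ : 0 < β₂) (hγ₁ : 0 < γ₁) (hγ₂ : 0 < γ₂)
    (hμ₁ : 0 < μ₁) (hμ₂ : 0 < μ₂) (hα₁ : 0 < α₁) (hα₂ : 0 < α₂)
    (hε₁ : 0 < ε₁) (hε₂ : 0 < ε₂) :
    (∀ i, osnField Λ μ μn β βw β₁ β₂ γ₁ γ₂ μ₁ μ₂ α₁ α₂ ε₁ ε₂
        ![Λ * βw / (μ * (β + βw)), μ / βw,
          (β * (Λ * βw / (μ * (β + βw))) - μn) / βw, 0, 0, 0, 0] i = 0) ∧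
    (0 < (β * (Λ * βw / (μ * (β + βw))) - μn) / βw ↔
      1 + β / βw < β * Λ / (μ * μn)) := by
  have hb : (0:ℝ) < μ * (β + βw) := by positivity
  have hbne : μ * (β + βw) ≠ 0 := ne_of_gt hb
  constructor
  · intro i
    fin_cases i
    · show Λ - μ * (Λ * βw / (μ * (β + βw))) - β * (Λ * βw / (μ * (β + βw))) * (μ / βw) = 0
      field_simp
      ring
    · show (μ / βw) * (β * (Λ * βw / (μ * (β + βw))) - μn -
          βw * ((β * (Λ * βw / (μ * (β + βw))) - μn) / βw)) = 0
      rw [mul_div_cancel₀ _ (ne_of_gt hβw)]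
      ring
    · show βw * (μ / βw) * ((β * (Λ * βw / (μ * (β + βw))) - μn) / βw) -
          μ * ((β * (Λ * βw / (μ * (β + βw))) - μn) / βw) = 0
      rw [mul_div_cancel₀ _ (ne_of_gt hβw)]
      ring
    · show β₁ * 0 * (μ / βw) / (ε₁ * 0 + α₁ * (μ / βw) + 1) - γ₁ * 0 = 0
      simp
    · show γ₁ * 0 - μ₁ * 0 = 0
      simp
    · show β₂ * 0 * (μ / βw) / (ε₂ * 0 + α₂ * (μ / βw) + 1) - γ₂ * 0 = 0
      simp
    · show γ₂ * 0 - μ₂ * 0 = 0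
      simp
  · have ha : Λ * βw / (μ * (β + βw)) * (μ * (β + βw)) = Λ * βw := by
      field_simp
    constructor
    · intro h
      have h1 : 0 < β * (Λ * βw / (μ * (β + βw))) - μn := by
        rcases div_pos_iff.mp h with ⟨h1, _⟩ | ⟨_, h2⟩
        · exact h1
        · linarith
      have h2 : μn * (μ * (β + βw)) < β * (Λ * βw) := by
        have := mul_lt_mul_of_pos_right (by linarith : μn < β * (Λ * βw / (μ * (β + βw)))) hb
        calc μn * (μ * (β + βw)) < β * (Λ * βw / (μ * (β + βw))) * (μ * (β + βw)) := this
          _ = β * (Λ * βw) := by field_simp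
      rw [show (1:ℝ) + β / βw = (βw + β) / βw by field_simp, div_lt_div_iff₀ hβw (by positivity)]
      ring_nf at h2 ⊢
      linarith
    · intro h
      rw [show (1:ℝ) + β / βw = (βw + β) / βw by field_simp, div_lt_div_iff₀ hβw (by positivity)] at h
      have h2 : μn * (μ * (β + βw)) < β * (Λ * βw) := by ring_nf at h ⊢; linarith
      have h1 : μn < β * (Λ * βw / (μ * (β + βw))) := by
        rw [← mul_div_assoc, lt_div_iff₀ hb]
        exact h2
      exact div_pos (by linarith) hβw

end
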